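/- Let y_1, y_2 be nonzero elements of a field with y_2 ≠ -1, and define H(u,v) = u + v + 1/u + 1/v + 1/(uv). Then H(y_2, (y_2+1)/(y_1 y_2)) = H(y_1, y_2), i.e. H is invariant under the QRT map (y_1, y_2) ↦ (y_2, (y_2+1)/(y_1 y_2)). -/

import Mathlib

/-- The function `H(u,v) = u + v + 1/u + 1/v + 1/(uv)` is invariant under the
QRT map `(y₁,y₂) ↦ (y₂,(y₂+1)/(y₁y₂))`. -/
theorem qrt_first_integral {F : Type*} [Field F] (y1 y2 : F)
    (h1 : y1 ≠ 0) (h2 : y2 ≠ 0) (h3 : y2 + 1 ≠ 0) :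
    let H : F → F → F := fun u v => u + v + 1 / u + 1 / v + 1 / (u * v)
    H y2 ((y2 + 1) / (y1 * y2)) = H y1 y2 := by
  intro H
  simp only [H, one_div, mul_inv, div_div_eq_mul_div, inv_div]
  field_simp
  ring
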